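/- Let β ∈ ℝ, γ > 0, and let μ, ν be compactly supported probability measures on ℝ with infinite support such that μ = Φ_{β,γ}[ν]. Then for every n ≥ 1, the monic orthogonal polynomials of μ satisfy L_ν[ L_μ[P^μ_n] ] − γ^{−1} (x − β) L_μ[P^μ_n] = −γ^{−1} P^μ_n. -/

import Mathlib

open MeasureTheory Polynomial

/-- Moments of a measure on ℝ. -/
noncomputable def mom (ρ : Measure ℝ) (k : ℕ) : ℝ := ∫ x, x ^ k ∂ρ

/-- The operator `L_ρ` on polynomials, defined via the moment sequence `m` of `ρ`:
`L[x^n] = Σ_{k=0}^{n-1} m_{n-1-k} x^k`. -/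
noncomputable def Lop (m : ℕ → ℝ) (f : Polynomial ℝ) : Polynomial ℝ :=
  f.sum fun n a => C a * ∑ k ∈ Finset.range n, C (m (n - 1 - k)) * X ^ k

/-- A measure has compact support. -/
def CompactSupp (μ : Measure ℝ) : Prop := ∃ K : Set ℝ, IsCompact K ∧ μ Kᶜ = 0

/-- The (topological) support of a measure on ℝ. -/
def msupport (μ : Measure ℝ) : Set ℝ := {x | ∀ U ∈ nhds x, μ U ≠ 0}

/-- `JacobiShift β γ mν mμ` says (at the level of moment sequences) that `μ = Φ_{β,γ}[ν]`. -/
def JacobiShift (β γ : ℝ) (mν mμ : ℕ → ℝ) : Prop :=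
  ∀ n : ℕ, 1 ≤ n →
    mμ n = β * mμ (n - 1) + γ * ∑ i ∈ Finset.range (n - 1), mν i * mμ (n - 2 - i)

/-- `P` is the family of monic orthogonal polynomials of `ρ`. -/
def IsMonicOPS (ρ : Measure ℝ) (P : ℕ → Polynomial ℝ) : Prop :=
  (∀ n, (P n).Monic) ∧ (∀ n, (P n).natDegree = n) ∧
  ∀ n m : ℕ, n ≠ m → ∫ x, (P n).eval x * (P m).eval x ∂ρ = 0

/-! ### Auxiliary machinery -/

/-- The polynomial `L[x^n]`. -/
noncomputable def Tpoly (m : ℕ → ℝ) (n : ℕ) : Polynomial ℝ :=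
  ∑ k ∈ Finset.range n, C (m (n - 1 - k)) * X ^ k

/-- The "integral" of a polynomial against the moment sequence `m`. -/
noncomputable def momSum (m : ℕ → ℝ) (f : Polynomial ℝ) : ℝ :=
  f.sum fun k a => a * m k

lemma Lop_def (m : ℕ → ℝ) (f : Polynomial ℝ) :
    Lop m f = f.sum fun n a => C a * Tpoly m n := rfl

lemma Lop_add (m : ℕ → ℝ) (f g : Polynomial ℝ) :
    Lop m (f + g) = Lop m f + Lop m g := by
  simp only [Lop_def]
  rw [Polynomial.sum_add_index]
  · intro i; simp
  · intro a b₁ b₂; simp [add_mul]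

lemma Lop_monomial (m : ℕ → ℝ) (n : ℕ) (a : ℝ) :
    Lop m (monomial n a) = C a * Tpoly m n := by
  simp only [Lop_def]
  rw [Polynomial.sum_monomial_index]
  simp

lemma Lop_X_pow (m : ℕ → ℝ) (n : ℕ) :
    Lop m (X ^ n) = Tpoly m n := by
  rw [X_pow_eq_monomial, Lop_monomial, C_1, one_mul]

lemma Lop_smul (m : ℕ → ℝ) (a : ℝ) (f : Polynomial ℝ) :
    Lop m (C a * f) = C a * Lop m f := by
  induction f using Polynomial.induction_on' with
  | add p q hp hq => rw [mul_add, Lop_add, hp, hq, Lop_add]; ring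
  | monomial k b => rw [C_mul_monomial, Lop_monomial, Lop_monomial, C_mul]; ring

lemma Lop_C (m : ℕ → ℝ) (a : ℝ) : Lop m (C a) = 0 := by
  have : (C a : Polynomial ℝ) = C a * X ^ 0 := by simp
  rw [this, Lop_smul, Lop_X_pow]
  simp [Tpoly]

lemma momSum_add (m : ℕ → ℝ) (f g : Polynomial ℝ) :
    momSum m (f + g) = momSum m f + momSum m g := by
  simp only [momSum]
  rw [Polynomial.sum_add_index]
  · intro i; simp
  · intro a b₁ b₂; simp [add_mul]

lemma momSum_monomial (m : ℕ → ℝ) (k : ℕ) (a : ℝ) :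
    momSum m (monomial k a) = a * m k := by
  simp only [momSum]
  rw [Polynomial.sum_monomial_index]
  simp

lemma Lop_one (m : ℕ → ℝ) : Lop m 1 = 0 := by
  rw [← C_1, Lop_C]

lemma Lop_zero (m : ℕ → ℝ) : Lop m 0 = 0 := by
  simp [Lop_def, Polynomial.sum_zero_index]

lemma momSum_zero (m : ℕ → ℝ) : momSum m 0 = 0 := by
  simp [momSum]

lemma Tpoly_succ (m : ℕ → ℝ) (n : ℕ) :
    Tpoly m (n + 1) = C (m n) + X * Tpoly m n := by
  simp only [Tpoly]
  rw [Finset.sum_range_succ']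
  simp only [Nat.add_sub_cancel, Nat.sub_zero, pow_zero, mul_one, pow_succ]
  rw [Finset.mul_sum, add_comm]
  congr 1
  refine Finset.sum_congr rfl fun k _ => ?_
  have h1 : n - (k + 1) = n - 1 - k := by omega
  rw [h1]
  ring

lemma momSum_Tpoly (m' m : ℕ → ℝ) (n : ℕ) :
    momSum m' (Tpoly m n) = ∑ k ∈ Finset.range n, m (n - 1 - k) * m' k := by
  simp only [Tpoly]
  induction (Finset.range n) using Finset.induction with
  | empty => simp [momSum_zero]
  | insert _ _ h ih =>
      rw [Finset.sum_insert h, Finset.sum_insert h, momSum_add, ih,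
        C_mul_X_pow_eq_monomial, momSum_monomial]

lemma Lop_X_mul (m : ℕ → ℝ) (f : Polynomial ℝ) :
    Lop m (X * f) = X * Lop m f + C (momSum m f) := by
  induction f using Polynomial.induction_on' with
  | add p q hp hq =>
      rw [mul_add, Lop_add, Lop_add, hp, hq, momSum_add, C_add]; ring
  | monomial k a =>
      rw [← C_mul_X_pow_eq_monomial, show (X : Polynomial ℝ) * (C a * X ^ k)
          = C a * X ^ (k + 1) by ring, Lop_smul, Lop_smul, Lop_X_pow, Lop_X_pow,
        Tpoly_succ, C_mul_X_pow_eq_monomial, momSum_monomial, C_mul]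
      ring

lemma keymono (mμ mν : ℕ → ℝ) {β γ : ℝ} (h0 : mμ 0 = 1)
    (hs : JacobiShift β γ mν mμ) (hγ : γ ≠ 0) (n : ℕ) :
    Lop mν (Lop mμ (X ^ n)) =
      C γ⁻¹ * (X - C β) * Lop mμ (X ^ n) - C γ⁻¹ * X ^ n + C γ⁻¹ * C (mμ n) := by
  induction n with
  | zero =>
      simp [pow_zero, Lop_one, Lop_zero, h0]
  | succ n ih =>
      have hA : Lop mμ (X ^ (n + 1)) = C (mμ n) + X * Lop mμ (X ^ n) := by
        rw [Lop_X_pow, Lop_X_pow, Tpoly_succ]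
      have hsum : momSum mν (Lop mμ (X ^ n)) = γ⁻¹ * (mμ (n + 1) - β * mμ n) := by
        rw [Lop_X_pow, momSum_Tpoly]
        have hh := hs (n + 1) (by omega)
        have h2 : n + 1 - 1 = n := by omega
        rw [h2] at hh
        have h3 : ∀ i, n + 1 - 2 - i = n - 1 - i := by omega
        simp only [h3] at hh
        have h4 : (∑ k ∈ Finset.range n, mμ (n - 1 - k) * mν k)
            = ∑ i ∈ Finset.range n, mν i * mμ (n - 1 - i) :=
          Finset.sum_congr rfl fun k _ => mul_comm _ _
        rw [h4]
        field_simp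
        linarith
      rw [hA, Lop_add, Lop_C, Lop_X_mul, ih, hsum]
      have hγγ : (C γ⁻¹ : Polynomial ℝ) * C γ = 1 := by
        rw [← C_mul, inv_mul_cancel₀ hγ, C_1]
      simp only [mul_sub, C_mul, C_sub]
      ring

lemma keyf (mμ mν : ℕ → ℝ) {β γ : ℝ} (h0 : mμ 0 = 1)
    (hs : JacobiShift β γ mν mμ) (hγ : γ ≠ 0) (f : Polynomial ℝ) :
    Lop mν (Lop mμ f) =
      C γ⁻¹ * (X - C β) * Lop mμ f - C γ⁻¹ * f + C γ⁻¹ * C (momSum mμ f) := by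
  induction f using Polynomial.induction_on' with
  | add p q hp hq =>
      rw [Lop_add, Lop_add, hp, hq, momSum_add, C_add]; ring
  | monomial k a =>
      rw [← C_mul_X_pow_eq_monomial, Lop_smul, Lop_smul,
        keymono mμ mν h0 hs hγ k]
      have : momSum mμ (C a * X ^ k) = a * mμ k := by
        rw [C_mul_X_pow_eq_monomial, momSum_monomial]
      rw [this, C_mul]
      ring

lemma integrable_pow_of_compactSupp (μ : Measure ℝ) [IsFiniteMeasure μ]
    (h : CompactSupp μ) (k : ℕ) : Integrable (fun x : ℝ => x ^ k) μ := by
  obtain ⟨K, hK, hK0⟩ := h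
  obtain ⟨R, hR⟩ := hK.isBounded.subset_closedBall 0
  have hae : ∀ᵐ x ∂μ, x ∈ K := by
    rw [ae_iff]
    exact hK0
  refine Integrable.mono' (integrable_const ((|R| + 1) ^ k))
    ((measurable_id.pow_const k).aestronglyMeasurable) ?_
  filter_upwards [hae] with x hx
  have hxR : |x| ≤ R := by
    have := hR hx
    simpa [Real.dist_eq] using this
  have : |x| ≤ |R| + 1 := le_trans hxR (by cases abs_cases R <;> linarith)
  calc ‖x ^ k‖ = |x| ^ k := by simp [abs_pow]
    _ ≤ (|R| + 1) ^ k := pow_le_pow_left₀ (abs_nonneg x) this k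

lemma momSum_eq_integral (μ : Measure ℝ) [IsFiniteMeasure μ]
    (h : CompactSupp μ) (f : Polynomial ℝ) :
    momSum (mom μ) f = ∫ x, f.eval x ∂μ := by
  rw [momSum, Polynomial.sum_over_range (f := fun k a => a * mom μ k) f fun n => zero_mul _]
  calc ∑ n ∈ Finset.range (f.natDegree + 1), f.coeff n * mom μ n
      = ∑ n ∈ Finset.range (f.natDegree + 1), ∫ x, f.coeff n * x ^ n ∂μ := by
        refine Finset.sum_congr rfl fun n _ => ?_
        rw [mom, integral_const_mul]
    _ = ∫ x, ∑ n ∈ Finset.range (f.natDegree + 1), f.coeff n * x ^ n ∂μ :=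
        (integral_finset_sum _ fun n _ =>
          (integrable_pow_of_compactSupp μ h n).const_mul _).symm
    _ = ∫ x, f.eval x ∂μ := by
        refine integral_congr_ae (Filter.Eventually.of_forall fun x => ?_)
        simp only []
        rw [eval_eq_sum_range]

theorem stmt14 (μ ν : Measure ℝ) [IsProbabilityMeasure μ] [IsProbabilityMeasure ν]
    (hcsμ : CompactSupp μ) (hcsν : CompactSupp ν)
    (hinfμ : (msupport μ).Infinite) (hinfν : (msupport ν).Infinite)
    (β : ℝ) (γ : ℝ) (hγ : 0 < γ)
    (hshift : JacobiShift β γ (mom ν) (mom μ))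
    (P : ℕ → Polynomial ℝ) (hP : IsMonicOPS μ P) :
    ∀ n : ℕ, 1 ≤ n →
      Lop (mom ν) (Lop (mom μ) (P n)) - C γ⁻¹ * (X - C β) * Lop (mom μ) (P n)
        = C (-γ⁻¹) * P n := by
  intro n hn
  have h0 : mom μ 0 = 1 := by
    simp [mom]
  have hP0 : P 0 = 1 := by
    exact Polynomial.eq_one_of_monic_natDegree_zero (hP.1 0) (hP.2.1 0)
  have hz : momSum (mom μ) (P n) = 0 := by
    rw [momSum_eq_integral μ hcsμ]
    have := hP.2.2 n 0 (by omega)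
    simpa [hP0] using this
  rw [keyf (mom μ) (mom ν) h0 hshift hγ.ne' (P n), hz]
  simp only [map_zero, mul_zero, map_neg]
  ring
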